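/- On a 2×L path-with-two-rows grid (one horizontal stripe of the open grid), if an independent set contains at least one even site and at least one odd site then it contains at most L−1 sites; equivalently, the only maximum independent sets (of size L) are the all-even and all-odd configurations. -/

import Mathlib

/-- Adjacency in the `2 × L` grid graph: vertex set `{0,…,L−1} × {0,1}`,
edges between vertices at ℓ1-distance 1. -/
def stripAdj (L : ℕ) (v w : Fin L × Fin 2) : Prop :=
  (v.2 = w.2 ∧ (v.1.val + 1 = w.1.val ∨ w.1.val + 1 = v.1.val)) ∨
  (v.1 = w.1 ∧ (v.2.val + 1 = w.2.val ∨ w.2.val + 1 = v.2.val))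

lemma strip_injOn_fst {L : ℕ} (σ : Finset (Fin L × Fin 2))
    (hind : ∀ v ∈ σ, ∀ w ∈ σ, ¬ stripAdj L v w) :
    Set.InjOn Prod.fst (σ : Set (Fin L × Fin 2)) := by
  intro v hv w hw h
  by_contra hne
  have h2 : v.2.val ≠ w.2.val := by
    intro h2
    exact hne (Prod.ext h (Fin.ext h2))
  exact hind v hv w hw (Or.inr ⟨h, by omega⟩)

lemma strip_filter_card (L : ℕ) (b : ℕ) (hb : b < 2) :
    (Finset.univ.filter (fun v : Fin L × Fin 2 => (v.1.val + v.2.val) % 2 = b)).card = L := by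
  conv_rhs => rw [← Finset.card_fin L]
  refine Finset.card_bij' (fun v _ => v.1)
    (fun j _ => (j, ⟨(j.val + b) % 2, by omega⟩)) ?_ ?_ ?_ ?_
  · intro v hv
    exact Finset.mem_univ _
  · intro j _
    simp only [Finset.mem_filter, Finset.mem_univ, true_and]
    show (j.val + (j.val + b) % 2) % 2 = b
    omega
  · intro v hv
    simp only [Finset.mem_filter, Finset.mem_univ, true_and] at hv
    have h2 := v.2.isLt
    exact Prod.ext rfl (Fin.ext (show (v.1.val + b) % 2 = v.2.val by omega))
  · intro j _
    rfl

lemma strip_card_eq_iff (L : ℕ) (hL : 2 ≤ L)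
    (σ : Finset (Fin L × Fin 2))
    (hind : ∀ v ∈ σ, ∀ w ∈ σ, ¬ stripAdj L v w) :
    σ.card = L ↔
      σ = Finset.univ.filter (fun v : Fin L × Fin 2 => (v.1.val + v.2.val) % 2 = 0) ∨
      σ = Finset.univ.filter (fun v : Fin L × Fin 2 => (v.1.val + v.2.val) % 2 = 1) := by
  constructor
  · intro hcard
    have hinj := strip_injOn_fst σ hind
    have himg : (σ.image Prod.fst).card = L := by
      rw [Finset.card_image_of_injOn hinj, hcard]
    have huniv : σ.image Prod.fst = Finset.univ := by
      apply Finset.eq_univ_of_card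
      rw [himg, Fintype.card_fin]
    have hmem : ∀ j : Fin L, ∃ i : Fin 2, (j, i) ∈ σ := by
      intro j
      have : j ∈ σ.image Prod.fst := huniv ▸ Finset.mem_univ j
      obtain ⟨v, hv, hv1⟩ := Finset.mem_image.mp this
      exact ⟨v.2, by rwa [← hv1, Prod.mk.eta]⟩
    have h0L : 0 < L := by omega
    obtain ⟨i0, hi0⟩ := hmem ⟨0, h0L⟩
    -- column n is occupied at row (n + i0) % 2
    have key : ∀ n (h : n < L), ((⟨n, h⟩ : Fin L), (⟨(n + i0.val) % 2, by omega⟩ : Fin 2)) ∈ σ := by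
      intro n
      induction n with
      | zero =>
        intro h
        have hi2 := i0.isLt
        have : (⟨(0 + i0.val) % 2, by omega⟩ : Fin 2) = i0 :=
          Fin.ext (show (0 + i0.val) % 2 = i0.val by omega)
        rwa [this]
      | succ n ih =>
        intro h
        have hn := ih (by omega)
        obtain ⟨i, hi⟩ := hmem ⟨n + 1, h⟩
        have hne : i.val ≠ (n + i0.val) % 2 := by
          intro heq
          apply hind _ hn _ hi
          exact Or.inl ⟨Fin.ext heq.symm, Or.inl rfl⟩
        have hi2 := i.isLt
        have : i = (⟨(n + 1 + i0.val) % 2, by omega⟩ : Fin 2) :=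
          Fin.ext (show i.val = (n + 1 + i0.val) % 2 by omega)
        rwa [this] at hi
    have hchar : σ = Finset.univ.filter
        (fun v : Fin L × Fin 2 => (v.1.val + v.2.val) % 2 = i0.val) := by
      have hi2 := i0.isLt
      ext v
      simp only [Finset.mem_filter, Finset.mem_univ, true_and]
      constructor
      · intro hv
        have hv' := key v.1.val v.1.isLt
        have heq : (⟨v.1.val, v.1.isLt⟩ : Fin L) = v.1 := Fin.ext rfl
        rw [heq] at hv'
        have : v = (v.1, (⟨(v.1.val + i0.val) % 2, by omega⟩ : Fin 2)) :=
          hinj hv hv' rfl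
        rw [this]
        show (v.1.val + (v.1.val + i0.val) % 2) % 2 = i0.val
        omega
      · intro hv
        have h2 := v.2.isLt
        have hv' := key v.1.val v.1.isLt
        have : ((⟨v.1.val, v.1.isLt⟩ : Fin L), (⟨(v.1.val + i0.val) % 2, by omega⟩ : Fin 2)) = v :=
          Prod.ext (Fin.ext rfl)
            (Fin.ext (show (v.1.val + i0.val) % 2 = v.2.val by omega))
        rwa [this] at hv'
    have hi2 := i0.isLt
    fin_cases i0
    · exact Or.inl hchar
    · exact Or.inr hchar
  · intro h
    rcases h with h | h <;> rw [h, strip_filter_card L _ (by omega)]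

/-- on the `2 × L` grid, an independent set containing at least one
even site and at least one odd site has at most `L − 1` sites; equivalently, the
only maximum independent sets (of size `L`) are the all-even and the all-odd
configurations. -/
theorem strip_max_independent_sets (L : ℕ) (hL : 2 ≤ L)
    (σ : Finset (Fin L × Fin 2))
    (hind : ∀ v ∈ σ, ∀ w ∈ σ, ¬ stripAdj L v w) :
    ((∃ v ∈ σ, (v.1.val + v.2.val) % 2 = 0) ∧ (∃ v ∈ σ, (v.1.val + v.2.val) % 2 = 1) →
      σ.card ≤ L - 1) ∧
    (σ.card = L ↔
      σ = Finset.univ.filter (fun v : Fin L × Fin 2 => (v.1.val + v.2.val) % 2 = 0) ∨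
      σ = Finset.univ.filter (fun v : Fin L × Fin 2 => (v.1.val + v.2.val) % 2 = 1)) := by
  have hiff := strip_card_eq_iff L hL σ hind
  have hle : σ.card ≤ L := by
    have hinj := strip_injOn_fst σ hind
    calc σ.card = (σ.image Prod.fst).card := (Finset.card_image_of_injOn hinj).symm
      _ ≤ Finset.univ.card := Finset.card_le_card (Finset.subset_univ _)
      _ = L := by rw [Finset.card_univ, Fintype.card_fin]
  refine ⟨?_, hiff⟩
  rintro ⟨⟨v, hv, hv0⟩, ⟨w, hw, hw1⟩⟩
  by_contra hc
  have hcard : σ.card = L := by omega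
  rcases hiff.mp hcard with h | h <;> rw [h] at hv hw <;>
    simp only [Finset.mem_filter] at hv hw <;> omega
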